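/- For the block matrix M = [[S, v], [0, 0]] ∈ se(3) with S ∈ so(3) skew-symmetric with θ = √(a²+b²+c²) > 0 and v ∈ ℝ³, the matrix exponential satisfies exp(M) = [[exp(S), A·v], [0, 1]] where A = I + ((1 − cos θ)/θ²)·S + ((θ − sin θ)/θ³)·S². -/

import Mathlib

open Matrix in
/-- The `SE(3)` exponential: for `M = [[S, v],[0,0]]` with `S ∈ so(3)`, `θ > 0`,
`exp(M) = [[exp S, A·v],[0,1]]` with `A = I + ((1−cos θ)/θ²)·S + ((θ−sin θ)/θ³)·S²`. -/
theorem se3_exp_formula (a b c : ℝ) (S : Matrix (Fin 3) (Fin 3) ℝ)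
    (hS : S = !![0, a, b; -a, 0, c; -b, -c, 0])
    (θ : ℝ) (hθdef : θ = Real.sqrt (a ^ 2 + b ^ 2 + c ^ 2)) (hθ : 0 < θ)
    (v : Matrix (Fin 3) (Fin 1) ℝ)
    (A : Matrix (Fin 3) (Fin 3) ℝ)
    (hA : A = 1 + ((1 - Real.cos θ) / θ ^ 2) • S + ((θ - Real.sin θ) / θ ^ 3) • (S ^ 2)) :
    NormedSpace.exp
        (Matrix.fromBlocks S v (0 : Matrix (Fin 1) (Fin 3) ℝ) (0 : Matrix (Fin 1) (Fin 1) ℝ)) =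
      Matrix.fromBlocks (NormedSpace.exp S) (A * v)
        (0 : Matrix (Fin 1) (Fin 3) ℝ) (1 : Matrix (Fin 1) (Fin 1) ℝ) := by
  have hθne : θ ≠ 0 := ne_of_gt hθ
  have hθ2 : θ ^ 2 = a ^ 2 + b ^ 2 + c ^ 2 := by
    rw [hθdef, Real.sq_sqrt (by positivity)]
  -- the key algebraic identity `S³ = -θ² • S`
  have hS3 : S ^ 3 = (-(θ ^ 2)) • S := by
    rw [hθ2, hS]
    ext i j
    fin_cases i <;> fin_cases j <;>
      simp [pow_succ, Matrix.mul_apply, Fin.sum_univ_succ] <;> ring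
  have hodd : ∀ k : ℕ, S ^ (2 * k + 1) = ((-(θ ^ 2)) ^ k) • S := by
    intro k
    induction k with
    | zero => simp
    | succ k ih =>
      rw [show 2 * (k + 1) + 1 = (2 * k + 1) + 2 by ring, pow_add, ih, smul_mul_assoc,
        ← pow_succ' S 2, hS3, smul_smul, ← pow_succ]
  have heven : ∀ k : ℕ, S ^ (2 * k + 2) = ((-(θ ^ 2)) ^ k) • (S ^ 2) := by
    intro k
    rw [show 2 * k + 2 = (2 * k + 1) + 1 by ring, pow_succ, hodd k, smul_mul_assoc, ← pow_two]
  have hneg : ∀ k : ℕ, (-(θ ^ 2)) ^ k = (-1) ^ k * θ ^ (2 * k) := by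
    intro k; rw [neg_pow, ← pow_mul]
  -- the scalar series for `(1 - cos θ)/θ²`
  have hcos : HasSum (fun k : ℕ => ((-(θ ^ 2)) ^ k * (((2 * k + 2).factorial : ℝ))⁻¹))
      ((1 - Real.cos θ) / θ ^ 2) := by
    have h1 := (hasSum_nat_add_iff'
      (f := fun n : ℕ => (-1) ^ n * θ ^ (2 * n) / ((2 * n).factorial : ℝ)) 1).mpr
      (Real.hasSum_cos θ)
    simp only [Finset.range_one, Finset.sum_singleton, pow_zero, mul_zero, one_mul,
      Nat.factorial_zero, Nat.cast_one, div_one] at h1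
    have h2 := h1.div_const (-(θ ^ 2))
    have hfn : (fun n : ℕ => (-1) ^ (n + 1) * θ ^ (2 * (n + 1)) / ((2 * (n + 1)).factorial : ℝ)
        / (-(θ ^ 2)))
        = fun k : ℕ => ((-(θ ^ 2)) ^ k * (((2 * k + 2).factorial : ℝ))⁻¹) := by
      funext k
      have hf : (((2 * k + 2).factorial : ℝ)) ≠ 0 :=
        Nat.cast_ne_zero.mpr (2 * k + 2).factorial_ne_zero
      rw [hneg, show 2 * (k + 1) = 2 * k + 2 by ring]
      field_simp
      ring
    have hval : (Real.cos θ - 1) / (-(θ ^ 2)) = (1 - Real.cos θ) / θ ^ 2 := by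
      field_simp
      ring
    rwa [hfn, hval] at h2
  -- the scalar series for `(θ - sin θ)/θ³`
  have hsin : HasSum (fun k : ℕ => ((-(θ ^ 2)) ^ k * (((2 * k + 3).factorial : ℝ))⁻¹))
      ((θ - Real.sin θ) / θ ^ 3) := by
    have h1 := (hasSum_nat_add_iff'
      (f := fun n : ℕ => (-1) ^ n * θ ^ (2 * n + 1) / ((2 * n + 1).factorial : ℝ)) 1).mpr
      (Real.hasSum_sin θ)
    simp only [Finset.range_one, Finset.sum_singleton, pow_zero, mul_zero, one_mul,
      Nat.factorial_one, Nat.cast_one, div_one, pow_one, zero_add] at h1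
    have h2 := h1.div_const (-(θ ^ 3))
    have hfn : (fun n : ℕ => (-1) ^ (n + 1) * θ ^ (2 * (n + 1) + 1)
        / ((2 * (n + 1) + 1).factorial : ℝ) / (-(θ ^ 3)))
        = fun k : ℕ => ((-(θ ^ 2)) ^ k * (((2 * k + 3).factorial : ℝ))⁻¹) := by
      funext k
      have hf : (((2 * k + 3).factorial : ℝ)) ≠ 0 :=
        Nat.cast_ne_zero.mpr (2 * k + 3).factorial_ne_zero
      rw [hneg, show 2 * (k + 1) + 1 = 2 * k + 3 by ring]
      field_simp
      ring
    have hval : (Real.sin θ - θ) / (-(θ ^ 3)) = (θ - Real.sin θ) / θ ^ 3 := by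
      field_simp
      ring
    rwa [hfn, hval] at h2
  -- `A` is the sum of the series `∑ Sⁿ/(n+1)!`
  have hAsum : HasSum (fun n : ℕ => (((n + 1).factorial : ℝ))⁻¹ • S ^ n) A := by
    have hOdd : HasSum (fun k : ℕ => (((2 * k + 1 + 1).factorial : ℝ))⁻¹ • S ^ (2 * k + 1))
        (((1 - Real.cos θ) / θ ^ 2) • S) := by
      have h := hcos.smul_const S
      have hfn : (fun k : ℕ => ((-(θ ^ 2)) ^ k * (((2 * k + 2).factorial : ℝ))⁻¹) • S)
          = fun k : ℕ => (((2 * k + 1 + 1).factorial : ℝ))⁻¹ • S ^ (2 * k + 1) := by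
        funext k
        rw [hodd k, smul_smul, mul_comm]
      rwa [hfn] at h
    have hEvenShift : HasSum
        (fun k : ℕ => (((2 * (k + 1) + 1).factorial : ℝ))⁻¹ • S ^ (2 * (k + 1)))
        (((θ - Real.sin θ) / θ ^ 3) • (S ^ 2)) := by
      have h := hsin.smul_const (S ^ 2)
      have hfn : (fun k : ℕ => ((-(θ ^ 2)) ^ k * (((2 * k + 3).factorial : ℝ))⁻¹) • (S ^ 2))
          = fun k : ℕ => (((2 * (k + 1) + 1).factorial : ℝ))⁻¹ • S ^ (2 * (k + 1)) := by
        funext k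
        rw [show 2 * (k + 1) = 2 * k + 2 by ring, show 2 * k + 2 + 1 = 2 * k + 3 by ring,
          heven k, smul_smul, mul_comm]
      rwa [hfn] at h
    have hEven : HasSum (fun k : ℕ => (((2 * k + 1).factorial : ℝ))⁻¹ • S ^ (2 * k))
        (((θ - Real.sin θ) / θ ^ 3) • (S ^ 2) + 1) := by
      have h := (hasSum_nat_add_iff
        (f := fun k : ℕ => (((2 * k + 1).factorial : ℝ))⁻¹ • S ^ (2 * k)) 1).mp hEvenShift
      simpa using h
    have h := HasSum.even_add_odd (f := fun n : ℕ => (((n + 1).factorial : ℝ))⁻¹ • S ^ n)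
      hEven hOdd
    rw [hA, show (1 : Matrix (Fin 3) (Fin 3) ℝ) + ((1 - Real.cos θ) / θ ^ 2) • S
        + ((θ - Real.sin θ) / θ ^ 3) • (S ^ 2)
        = ((θ - Real.sin θ) / θ ^ 3) • (S ^ 2) + 1 + ((1 - Real.cos θ) / θ ^ 2) • S by abel]
    exact h
  -- now the block matrix computation
  set N : Matrix (Fin 3 ⊕ Fin 1) (Fin 3 ⊕ Fin 1) ℝ := Matrix.fromBlocks S v 0 0 with hN
  have hpow : ∀ n : ℕ, N ^ (n + 1) = Matrix.fromBlocks (S ^ (n + 1)) (S ^ n * v) 0 0 := by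
    intro n
    induction n with
    | zero => simp [hN]
    | succ n ih =>
      rw [pow_succ, ih, hN, Matrix.fromBlocks_multiply]
      simp [← pow_succ]
  letI : SeminormedRing (Matrix (Fin 3) (Fin 3) ℝ) := Matrix.linftyOpSemiNormedRing
  letI : NormedRing (Matrix (Fin 3) (Fin 3) ℝ) := Matrix.linftyOpNormedRing
  letI : NormedAlgebra ℝ (Matrix (Fin 3) (Fin 3) ℝ) := Matrix.linftyOpNormedAlgebra
  letI : SeminormedRing (Matrix (Fin 3 ⊕ Fin 1) (Fin 3 ⊕ Fin 1) ℝ) :=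
    Matrix.linftyOpSemiNormedRing
  letI : NormedRing (Matrix (Fin 3 ⊕ Fin 1) (Fin 3 ⊕ Fin 1) ℝ) := Matrix.linftyOpNormedRing
  letI : NormedAlgebra ℝ (Matrix (Fin 3 ⊕ Fin 1) (Fin 3 ⊕ Fin 1) ℝ) :=
    Matrix.linftyOpNormedAlgebra
  have hexpS : HasSum (fun n : ℕ => ((n.factorial : ℝ))⁻¹ • S ^ n) (NormedSpace.exp S) :=
    NormedSpace.exp_series_hasSum_exp' S
  have hshift : HasSum (fun n : ℕ => (((n + 1).factorial : ℝ))⁻¹ • S ^ (n + 1))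
      (NormedSpace.exp S - 1) := by
    have h := (hasSum_nat_add_iff'
      (f := fun n : ℕ => ((n.factorial : ℝ))⁻¹ • S ^ n) 1).mpr hexpS
    simpa using h
  have hAv : HasSum (fun n : ℕ => (((n + 1).factorial : ℝ))⁻¹ • (S ^ n * v)) (A * v) := by
    let L : Matrix (Fin 3) (Fin 3) ℝ →ₗ[ℝ] Matrix (Fin 3) (Fin 1) ℝ :=
      { toFun := fun X => X * v
        map_add' := fun X Y => Matrix.add_mul X Y v
        map_smul' := fun r X => Matrix.smul_mul r X v }
    have h := hAsum.mapL (LinearMap.toContinuousLinearMap L)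
    simpa [L, smul_mul_assoc] using h
  let L2 : (Matrix (Fin 3) (Fin 3) ℝ × Matrix (Fin 3) (Fin 1) ℝ) →ₗ[ℝ]
      Matrix (Fin 3 ⊕ Fin 1) (Fin 3 ⊕ Fin 1) ℝ :=
    { toFun := fun p => Matrix.fromBlocks p.1 p.2 0 0
      map_add' := fun p q => by
        simp [Matrix.fromBlocks_add]
      map_smul' := fun r p => by
        simp [Matrix.fromBlocks_smul] }
  have hbig1 : HasSum (fun n : ℕ => (((n + 1).factorial : ℝ))⁻¹ • N ^ (n + 1))
      (Matrix.fromBlocks (NormedSpace.exp S - 1) (A * v) 0 0) := by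
    have h := (hshift.prodMk hAv).mapL (LinearMap.toContinuousLinearMap L2)
    have hfn : (fun n : ℕ => LinearMap.toContinuousLinearMap L2
        ((((n + 1).factorial : ℝ))⁻¹ • S ^ (n + 1), (((n + 1).factorial : ℝ))⁻¹ • (S ^ n * v)))
        = fun n : ℕ => (((n + 1).factorial : ℝ))⁻¹ • N ^ (n + 1) := by
      funext n
      show Matrix.fromBlocks _ _ _ _ = _
      rw [hpow n, Matrix.fromBlocks_smul]
      simp
    rw [hfn] at h
    exact h
  have hbigsum : HasSum (fun n : ℕ => ((n.factorial : ℝ))⁻¹ • N ^ n)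
      (Matrix.fromBlocks (NormedSpace.exp S) (A * v) 0 1) := by
    refine (hasSum_nat_add_iff' (f := fun n : ℕ => ((n.factorial : ℝ))⁻¹ • N ^ n) 1).mp ?_
    have : (Matrix.fromBlocks (NormedSpace.exp S) (A * v) 0 1 :
          Matrix (Fin 3 ⊕ Fin 1) (Fin 3 ⊕ Fin 1) ℝ)
        - ∑ i ∈ Finset.range 1, ((i.factorial : ℝ))⁻¹ • N ^ i
        = Matrix.fromBlocks (NormedSpace.exp S - 1) (A * v) 0 0 := by
      simp only [Finset.range_one, Finset.sum_singleton, Nat.factorial_zero, Nat.cast_one,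
        inv_one, pow_zero, one_smul, ← Matrix.fromBlocks_one (l := Fin 3) (m := Fin 1) (α := ℝ),
        sub_eq_add_neg, Matrix.fromBlocks_neg, Matrix.fromBlocks_add]
      simp [sub_eq_add_neg]
    rw [this]
    exact hbig1
  exact (NormedSpace.exp_series_hasSum_exp' N).unique hbigsum
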